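/- There exists an absolute constant C > 0 with the following property. Let λ ∈ ℂ satisfy |λ − k| ≥ 1/9 for every integer k. Then for every integer k ≥ 0 and every j ∈ {k−1, k, k+1, −k, −k−2}: (k+1)/(|λ−(k−1)|·|λ−(k+1)|) + (k+1)/(|λ+k+2|·|λ+k|) + 1/|λ−j| ≤ C·(1/(1+|Im λ|) + (1+|Re λ|)/(1+|Im λ|)²). -/

import Mathlib

noncomputable section

/-- The quantitative bound underlying the resolvent estimate for the linearized Stokes
operator on the sphere: if `λ ∈ ℂ` stays at distance at least `1/9` from every integer,
then for every `k ≥ 0` and every `j ∈ {k−1, k, k+1, −k, −k−2}`,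
`(k+1)/(|λ−(k−1)||λ−(k+1)|) + (k+1)/(|λ+k+2||λ+k|) + 1/|λ−j|`
is bounded by `C (1/(1+|Im λ|) + (1+|Re λ|)/(1+|Im λ|)²)`. -/
theorem resolvent_quantitative_bound :
    ∃ C : ℝ, 0 < C ∧ ∀ lam : ℂ, (∀ k : ℤ, 1 / 9 ≤ ‖lam - k‖) →
      ∀ k : ℕ, ∀ j : ℤ,
        (j = (k : ℤ) - 1 ∨ j = (k : ℤ) ∨ j = (k : ℤ) + 1 ∨ j = -(k : ℤ) ∨
          j = -(k : ℤ) - 2) →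
        ((k : ℝ) + 1) / (‖lam - ((k : ℂ) - 1)‖ * ‖lam - ((k : ℂ) + 1)‖)
          + ((k : ℝ) + 1) / (‖lam + (k : ℂ) + 2‖ * ‖lam + (k : ℂ)‖)
          + 1 / ‖lam - (j : ℂ)‖
        ≤ C * (1 / (1 + |lam.im|) + (1 + |lam.re|) / (1 + |lam.im|) ^ 2) := by
  refine ⟨648, by norm_num, ?_⟩
  intro lam hlam k j _
  set x : ℝ := |lam.re| with hxdef
  set y : ℝ := |lam.im| with hydef
  have hx0 : 0 ≤ x := abs_nonneg _
  have hy0 : 0 ≤ y := abs_nonneg _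
  set t : ℝ := 1 + y with htdef
  have ht0 : 0 < t := by positivity
  -- key lower bound for distance to any integer
  have key : ∀ m : ℤ, t / 18 ≤ ‖lam - m‖ := by
    intro m
    have h1 := hlam m
    have h2 : y ≤ ‖lam - m‖ := by
      have h := Complex.abs_im_le_norm (lam - m)
      simpa [hydef] using h
    rw [htdef]; linarith
  have hre : ∀ m : ℤ, |lam.re - m| ≤ ‖lam - m‖ := by
    intro m
    have h := Complex.abs_re_le_norm (lam - m)
    simpa using h
  -- the five absolute values
  set A := ‖lam - ((k : ℂ) - 1)‖ with hAdef
  set B := ‖lam - ((k : ℂ) + 1)‖ with hBdef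
  set D := ‖lam + (k : ℂ) + 2‖ with hDdef
  set E := ‖lam + (k : ℂ)‖ with hEdef
  set F := ‖lam - (j : ℂ)‖ with hFdef
  have hA : t / 18 ≤ A := by
    have h := key ((k : ℤ) - 1)
    have e : lam - (((k : ℤ) - 1 : ℤ) : ℂ) = lam - ((k : ℂ) - 1) := by push_cast; ring
    rwa [e] at h
  have hB : t / 18 ≤ B := by
    have h := key ((k : ℤ) + 1)
    have e : lam - (((k : ℤ) + 1 : ℤ) : ℂ) = lam - ((k : ℂ) + 1) := by push_cast; ring
    rwa [e] at h
  have hD : t / 18 ≤ D := by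
    have h := key (-(k : ℤ) - 2)
    have e : lam - ((-(k : ℤ) - 2 : ℤ) : ℂ) = lam + (k : ℂ) + 2 := by push_cast; ring
    rwa [e] at h
  have hE : t / 18 ≤ E := by
    have h := key (-(k : ℤ))
    have e : lam - ((-(k : ℤ) : ℤ) : ℂ) = lam + (k : ℂ) := by push_cast; ring
    rwa [e] at h
  have hF : t / 18 ≤ F := key j
  have ht18 : (0:ℝ) < t / 18 := by positivity
  have hA0 : 0 < A := lt_of_lt_of_le ht18 hA
  have hB0 : 0 < B := lt_of_lt_of_le ht18 hB
  have hD0 : 0 < D := lt_of_lt_of_le ht18 hD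
  have hE0 : 0 < E := lt_of_lt_of_le ht18 hE
  have hF0 : 0 < F := lt_of_lt_of_le ht18 hF
  -- upper bounds for k+1
  have hk1 : (k : ℝ) + 1 ≤ x + B := by
    have h := hre ((k : ℤ) + 1)
    have e : lam - (((k : ℤ) + 1 : ℤ) : ℂ) = lam - ((k : ℂ) + 1) := by push_cast; ring
    rw [e, ← hBdef] at h
    have h1 : -(lam.re - (((k : ℤ) + 1 : ℤ) : ℝ)) ≤ |lam.re - (((k : ℤ) + 1 : ℤ) : ℝ)| :=
      neg_le_abs _
    have h2 : lam.re ≤ x := le_abs_self _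
    push_cast at h h1
    linarith
  have hk2 : (k : ℝ) + 1 ≤ (x + 1) + E := by
    have h := hre (-(k : ℤ))
    have e : lam - ((-(k : ℤ) : ℤ) : ℂ) = lam + (k : ℂ) := by push_cast; ring
    rw [e, ← hEdef] at h
    have h1 : lam.re - ((-(k : ℤ) : ℤ) : ℝ) ≤ |lam.re - ((-(k : ℤ) : ℤ) : ℝ)| := le_abs_self _
    have h2 : -x ≤ lam.re := neg_abs_le _
    push_cast at h h1
    linarith
  -- bound term 1
  have T1 : ((k : ℝ) + 1) / (A * B) ≤ 324 * x / t ^ 2 + 18 / t := by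
    have s1 : ((k : ℝ) + 1) / (A * B) ≤ (x + B) / (A * B) := by gcongr
    have s2 : (x + B) / (A * B) = x / (A * B) + 1 / A := by
      field_simp
    have s3 : x / (A * B) ≤ x / (t / 18 * (t / 18)) := by gcongr
    have s4 : x / (t / 18 * (t / 18)) = 324 * x / t ^ 2 := by
      field_simp; ring
    have s5 : 1 / A ≤ 18 / t := by
      have h := one_div_le_one_div_of_le ht18 hA
      rwa [one_div_div] at h
    linarith
  -- bound term 2
  have T2 : ((k : ℝ) + 1) / (D * E) ≤ 324 * (x + 1) / t ^ 2 + 18 / t := by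
    have s1 : ((k : ℝ) + 1) / (D * E) ≤ ((x + 1) + E) / (D * E) := by gcongr
    have s2 : ((x + 1) + E) / (D * E) = (x + 1) / (D * E) + 1 / D := by
      field_simp
    have s3 : (x + 1) / (D * E) ≤ (x + 1) / (t / 18 * (t / 18)) := by gcongr
    have s4 : (x + 1) / (t / 18 * (t / 18)) = 324 * (x + 1) / t ^ 2 := by
      field_simp; ring
    have s5 : 1 / D ≤ 18 / t := by
      have h := one_div_le_one_div_of_le ht18 hD
      rwa [one_div_div] at h
    linarith
  -- bound term 3
  have T3 : 1 / F ≤ 18 / t := by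
    have h := one_div_le_one_div_of_le ht18 hF
    rwa [one_div_div] at h
  -- conclude
  have goalfin : 324 * x / t ^ 2 + 18 / t + (324 * (x + 1) / t ^ 2 + 18 / t) + 18 / t
      ≤ 648 * (1 / t + (1 + x) / t ^ 2) := by
    have e : 648 * (1 / t + (1 + x) / t ^ 2)
        - (324 * x / t ^ 2 + 18 / t + (324 * (x + 1) / t ^ 2 + 18 / t) + 18 / t)
        = 594 / t + 324 / t ^ 2 := by
      field_simp
      ring
    have hpos : (0:ℝ) ≤ 594 / t + 324 / t ^ 2 := by positivity
    linarith
  linarith
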